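/- There exists a constant C > 0 such that for all real T ≥ 2, the sum over integers n with 2 ≤ n ≤ T of θ(n)·θ(n−1) is at most C·T·(log T)². -/

import Mathlib

open Finset

/-- Every `m > 0` has at most twice as many divisors as divisors `≤ √m`. -/
lemma divisors_card_le_two_mul (m : ℕ) (hm : 0 < m) :
    m.divisors.card ≤ 2 * (m.divisors.filter (fun a => a * a ≤ m)).card := by
  classical
  set S := m.divisors.filter (fun a => a * a ≤ m) with hSdef
  have hsubset : m.divisors ⊆ S ∪ S.image (fun a => m / a) := by
    intro a ha
    have hdvd : a ∣ m := (Nat.mem_divisors.mp ha).1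
    have ha0 : 0 < a := Nat.pos_of_dvd_of_pos hdvd hm
    rcases le_or_gt (a * a) m with h | h
    · exact mem_union_left _ (mem_filter.mpr ⟨ha, h⟩)
    · apply mem_union_right
      have hmul : a * (m / a) = m := Nat.mul_div_cancel' hdvd
      have h1 : m / a < a := by nlinarith
      refine mem_image.mpr ⟨m / a, mem_filter.mpr ⟨Nat.mem_divisors.mpr
        ⟨Nat.div_dvd_of_dvd hdvd, hm.ne'⟩, ?_⟩, ?_⟩
      · nlinarith
      · exact Nat.div_div_self hdvd hm.ne'
  calc m.divisors.card ≤ (S ∪ S.image (fun a => m / a)).card := card_le_card hsubset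
    _ ≤ S.card + (S.image (fun a => m / a)).card := card_union_le _ _
    _ ≤ S.card + S.card := add_le_add le_rfl card_image_le
    _ = 2 * S.card := (two_mul _).symm

/-- Counting `n ∈ [2,N]` with `a ∣ n` and `b ∣ n-1`. -/
lemma count_prog_le (a b N : ℕ) (ha : 0 < a) (hb : 0 < b) :
    ((Finset.Icc 2 N).filter (fun n => a ∣ n ∧ b ∣ (n - 1))).card ≤ N / (a * b) + 1 := by
  classical
  set F := (Finset.Icc 2 N).filter (fun n => a ∣ n ∧ b ∣ (n - 1)) with hF
  have hab : 0 < a * b := Nat.mul_pos ha hb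
  have hmono : ∀ n1 ∈ F, ∀ n2 ∈ F, n1 < n2 → n1 / (a * b) < n2 / (a * b) := by
    intro n1 h1 n2 h2 hlt
    simp only [hF, mem_filter, Finset.mem_Icc] at h1 h2
    obtain ⟨⟨h1l, h1r⟩, ha1, hb1⟩ := h1
    obtain ⟨⟨h2l, h2r⟩, ha2, hb2⟩ := h2
    have hda : a ∣ n2 - n1 := Nat.dvd_sub ha2 ha1
    have hdb : b ∣ n2 - n1 := by
      have he : n2 - n1 = (n2 - 1) - (n1 - 1) := by omega
      rw [he]; exact Nat.dvd_sub hb2 hb1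
    have hcop : Nat.Coprime a b := by
      have hg1 : Nat.gcd a b ∣ n1 := (Nat.gcd_dvd_left a b).trans ha1
      have hg2 : Nat.gcd a b ∣ n1 - 1 := (Nat.gcd_dvd_right a b).trans hb1
      have hone : Nat.gcd a b ∣ 1 := by
        have h3 : n1 - (n1 - 1) = 1 := by omega
        have := Nat.dvd_sub hg1 hg2
        rwa [h3] at this
      exact Nat.eq_one_of_dvd_one hone
    have hdab : a * b ∣ n2 - n1 := hcop.mul_dvd_of_dvd_of_dvd hda hdb
    have hge : n1 + a * b ≤ n2 := by
      have := Nat.le_of_dvd (by omega) hdab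
      omega
    calc n1 / (a * b) < n1 / (a * b) + 1 := Nat.lt_succ_self _
      _ = (n1 + a * b) / (a * b) := (Nat.add_div_right n1 hab).symm
      _ ≤ n2 / (a * b) := Nat.div_le_div_right hge
  have hinj : Set.InjOn (fun n => n / (a * b)) F := by
    intro x hx y hy hxy
    by_contra hne
    rcases Nat.lt_or_ge x y with h | h
    · exact absurd hxy (Nat.ne_of_lt (hmono x hx y hy h))
    · have h' : y < x := by omega
      exact absurd hxy.symm (Nat.ne_of_lt (hmono y hy x hx h'))
  have himg : F.image (fun n => n / (a * b)) ⊆ Finset.range (N / (a * b) + 1) := by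
    intro k hk
    obtain ⟨n, hn, rfl⟩ := mem_image.mp hk
    simp only [hF, mem_filter, Finset.mem_Icc] at hn
    exact Finset.mem_range.mpr (Nat.lt_succ_of_le (Nat.div_le_div_right hn.1.2))
  calc F.card = (F.image (fun n => n / (a * b))).card := (Finset.card_image_of_injOn hinj).symm
    _ ≤ (Finset.range (N / (a * b) + 1)).card := card_le_card himg
    _ = N / (a * b) + 1 := Finset.card_range _

/-- Lemma 3: There is a constant `C > 0` such that for all real
`T ≥ 2`, `∑_{2 ≤ n ≤ T} θ(n)·θ(n-1) ≤ C·T·(log T)²`. -/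
theorem sum_theta_theta_bound :
    ∃ C : ℝ, 0 < C ∧ ∀ T : ℝ, 2 ≤ T →
      (∑ n ∈ Finset.Icc 2 ⌊T⌋₊, ((n.divisors.card : ℝ) * ((n - 1).divisors.card : ℝ))) ≤
        C * T * Real.log T ^ 2 := by
  classical
  refine ⟨100, by norm_num, ?_⟩
  intro T hT
  set N := ⌊T⌋₊ with hNdef
  set K := Nat.sqrt N with hKdef
  have hN2 : 2 ≤ N := Nat.le_floor (by exact_mod_cast hT)
  -- Step 1: the key natural-number inequality
  have key : (∑ n ∈ Finset.Icc 2 N, n.divisors.card * (n - 1).divisors.card)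
      ≤ 4 * ∑ a ∈ Finset.Icc 1 K, ∑ b ∈ Finset.Icc 1 K, (N / (a * b) + 1) := by
    have step1 : ∀ n ∈ Finset.Icc 2 N,
        n.divisors.card * (n - 1).divisors.card ≤
        4 * (((Finset.Icc 1 K).filter (· ∣ n)).card *
             ((Finset.Icc 1 K).filter (· ∣ (n - 1))).card) := by
      intro n hn
      rw [Finset.mem_Icc] at hn
      have hn0 : 0 < n := by omega
      have hn1 : 0 < n - 1 := by omega
      have hA : (n.divisors.filter (fun a => a * a ≤ n)) ⊆
          (Finset.Icc 1 K).filter (· ∣ n) := by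
        intro a haa
        simp only [mem_filter, Nat.mem_divisors] at haa ⊢
        obtain ⟨⟨hd, _⟩, hsq⟩ := haa
        have ha0 : 0 < a := Nat.pos_of_dvd_of_pos hd hn0
        exact ⟨Finset.mem_Icc.mpr ⟨ha0, Nat.le_sqrt.mpr (le_trans hsq hn.2)⟩, hd⟩
      have hB : ((n - 1).divisors.filter (fun a => a * a ≤ n - 1)) ⊆
          (Finset.Icc 1 K).filter (· ∣ (n - 1)) := by
        intro a haa
        simp only [mem_filter, Nat.mem_divisors] at haa ⊢
        obtain ⟨⟨hd, _⟩, hsq⟩ := haa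
        have ha0 : 0 < a := Nat.pos_of_dvd_of_pos hd hn1
        exact ⟨Finset.mem_Icc.mpr ⟨ha0, Nat.le_sqrt.mpr (le_trans hsq (by omega))⟩, hd⟩
      have h1 := divisors_card_le_two_mul n hn0
      have h2 := divisors_card_le_two_mul (n - 1) hn1
      have c1 := Finset.card_le_card hA
      have c2 := Finset.card_le_card hB
      calc n.divisors.card * (n - 1).divisors.card
          ≤ (2 * (n.divisors.filter (fun a => a * a ≤ n)).card) *
            (2 * ((n - 1).divisors.filter (fun a => a * a ≤ n - 1)).card) :=
            Nat.mul_le_mul h1 h2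
        _ = 4 * ((n.divisors.filter (fun a => a * a ≤ n)).card *
              ((n - 1).divisors.filter (fun a => a * a ≤ n - 1)).card) := by ring
        _ ≤ 4 * (((Finset.Icc 1 K).filter (· ∣ n)).card *
              ((Finset.Icc 1 K).filter (· ∣ (n - 1))).card) := by
            exact Nat.mul_le_mul_left 4 (Nat.mul_le_mul c1 c2)
    have swap : ∑ n ∈ Finset.Icc 2 N, ((Finset.Icc 1 K).filter (· ∣ n)).card *
          ((Finset.Icc 1 K).filter (· ∣ (n - 1))).card
        = ∑ a ∈ Finset.Icc 1 K, ∑ b ∈ Finset.Icc 1 K,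
            ((Finset.Icc 2 N).filter (fun n => a ∣ n ∧ b ∣ (n - 1))).card := by
      have e1 : ∀ n : ℕ, ((Finset.Icc 1 K).filter (· ∣ n)).card *
          ((Finset.Icc 1 K).filter (· ∣ (n - 1))).card
          = ∑ a ∈ Finset.Icc 1 K, ∑ b ∈ Finset.Icc 1 K,
              (if a ∣ n ∧ b ∣ (n - 1) then 1 else 0) := by
        intro n
        rw [Finset.card_filter, Finset.card_filter, Finset.sum_mul_sum]
        refine Finset.sum_congr rfl fun a _ => Finset.sum_congr rfl fun b _ => ?_
        by_cases h1 : a ∣ n <;> by_cases h2 : b ∣ (n - 1) <;> simp [h1, h2]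
      simp_rw [e1]
      rw [Finset.sum_comm]
      refine Finset.sum_congr rfl fun a _ => ?_
      rw [Finset.sum_comm]
      refine Finset.sum_congr rfl fun b _ => ?_
      rw [Finset.card_filter]
    calc (∑ n ∈ Finset.Icc 2 N, n.divisors.card * (n - 1).divisors.card)
        ≤ ∑ n ∈ Finset.Icc 2 N, 4 * (((Finset.Icc 1 K).filter (· ∣ n)).card *
            ((Finset.Icc 1 K).filter (· ∣ (n - 1))).card) := Finset.sum_le_sum step1
      _ = 4 * ∑ n ∈ Finset.Icc 2 N, (((Finset.Icc 1 K).filter (· ∣ n)).card *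
            ((Finset.Icc 1 K).filter (· ∣ (n - 1))).card) := (Finset.mul_sum _ _ _).symm
      _ = 4 * ∑ a ∈ Finset.Icc 1 K, ∑ b ∈ Finset.Icc 1 K,
            ((Finset.Icc 2 N).filter (fun n => a ∣ n ∧ b ∣ (n - 1))).card := by rw [swap]
      _ ≤ 4 * ∑ a ∈ Finset.Icc 1 K, ∑ b ∈ Finset.Icc 1 K, (N / (a * b) + 1) := by
          refine Nat.mul_le_mul_left 4 (Finset.sum_le_sum fun a haK => Finset.sum_le_sum
            fun b hbK => ?_)
          rw [Finset.mem_Icc] at haK hbK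
          exact count_prog_le a b N (by omega) (by omega)
  -- Step 2: pass to the reals
  set H : ℝ := ∑ a ∈ Finset.Icc 1 K, ((a : ℝ))⁻¹ with hHdef
  have hH0 : 0 ≤ H := Finset.sum_nonneg fun a _ => by positivity
  have hRHS : ((∑ a ∈ Finset.Icc 1 K, ∑ b ∈ Finset.Icc 1 K, (N / (a * b) + 1) : ℕ) : ℝ)
      ≤ (N : ℝ) * H ^ 2 + (K : ℝ) ^ 2 := by
    push_cast
    have hb1 : ∀ a b : ℕ, ((N / (a * b) : ℕ) : ℝ) + 1 ≤ (N : ℝ) * ((a : ℝ))⁻¹ * ((b : ℝ))⁻¹ + 1 := by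
      intro a b
      have := Nat.cast_div_le (α := ℝ) (m := N) (n := a * b)
      have heq : ((N : ℝ) / ((a * b : ℕ) : ℝ)) = (N : ℝ) * ((a : ℝ))⁻¹ * ((b : ℝ))⁻¹ := by
        push_cast
        rw [div_eq_mul_inv, mul_inv, mul_assoc]
      linarith [this, heq ▸ this]
    calc (∑ a ∈ Finset.Icc 1 K, ∑ b ∈ Finset.Icc 1 K, (((N / (a * b) : ℕ) : ℝ) + 1))
        ≤ ∑ a ∈ Finset.Icc 1 K, ∑ b ∈ Finset.Icc 1 K,
            ((N : ℝ) * ((a : ℝ))⁻¹ * ((b : ℝ))⁻¹ + 1) :=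
          Finset.sum_le_sum fun a _ => Finset.sum_le_sum fun b _ => hb1 a b
      _ = (N : ℝ) * H ^ 2 + (K : ℝ) ^ 2 := by
          simp only [Finset.sum_add_distrib, Finset.sum_const, Nat.card_Icc, nsmul_eq_mul]
          have : ∑ a ∈ Finset.Icc 1 K, ∑ b ∈ Finset.Icc 1 K,
              (N : ℝ) * ((a : ℝ))⁻¹ * ((b : ℝ))⁻¹ = (N : ℝ) * (H * H) := by
            rw [hHdef, Finset.sum_mul_sum, Finset.mul_sum]
            refine Finset.sum_congr rfl fun a _ => ?_
            rw [Finset.mul_sum]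
            exact Finset.sum_congr rfl fun b _ => by ring
          rw [this]
          push_cast
          ring
  -- Harmonic bound
  have hHarm : H ≤ 1 + Real.log K := by
    have h1 := harmonic_le_one_add_log K
    have heq : ((harmonic K : ℚ) : ℝ) = H := by
      rw [harmonic_eq_sum_Icc]
      push_cast
      rfl
    linarith [heq ▸ h1]
  -- size comparisons
  have hT0 : (0 : ℝ) < T := by linarith
  have hNT : (N : ℝ) ≤ T := Nat.floor_le hT0.le
  have hKN : (K : ℝ) ^ 2 ≤ (N : ℝ) := by
    have h : K ^ 2 ≤ N := Nat.sqrt_le' N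
    exact_mod_cast h
  have hK1 : 1 ≤ K := by
    have : 1 * 1 ≤ N := by omega
    exact Nat.le_sqrt.mpr this
  have hlogK : Real.log K ≤ Real.log T := by
    apply Real.log_le_log (by exact_mod_cast hK1)
    calc (K : ℝ) ≤ (N : ℝ) := by exact_mod_cast Nat.sqrt_le_self N
      _ ≤ T := hNT
  set L := Real.log T with hLdef
  have hL : (1 : ℝ) / 2 ≤ L := by
    have h2 : Real.log 2 ≤ L := Real.log_le_log (by norm_num) hT
    have := Real.log_two_gt_d9
    linarith
  have hHL : H ≤ 1 + L := le_trans hHarm (by linarith)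
  -- put everything together
  have castLHS : (∑ n ∈ Finset.Icc 2 N, ((n.divisors.card : ℝ) * ((n - 1).divisors.card : ℝ)))
      = ((∑ n ∈ Finset.Icc 2 N, n.divisors.card * (n - 1).divisors.card : ℕ) : ℝ) := by
    push_cast
    rfl
  rw [castLHS]
  have keyR : ((∑ n ∈ Finset.Icc 2 N, n.divisors.card * (n - 1).divisors.card : ℕ) : ℝ)
      ≤ 4 * ((N : ℝ) * H ^ 2 + (K : ℝ) ^ 2) := by
    have h4 : ((∑ n ∈ Finset.Icc 2 N, n.divisors.card * (n - 1).divisors.card : ℕ) : ℝ)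
        ≤ ((4 * ∑ a ∈ Finset.Icc 1 K, ∑ b ∈ Finset.Icc 1 K, (N / (a * b) + 1) : ℕ) : ℝ) := by
      exact_mod_cast key
    calc ((∑ n ∈ Finset.Icc 2 N, n.divisors.card * (n - 1).divisors.card : ℕ) : ℝ)
        ≤ ((4 * ∑ a ∈ Finset.Icc 1 K, ∑ b ∈ Finset.Icc 1 K, (N / (a * b) + 1) : ℕ) : ℝ) := h4
      _ = 4 * ((∑ a ∈ Finset.Icc 1 K, ∑ b ∈ Finset.Icc 1 K, (N / (a * b) + 1) : ℕ) : ℝ) := by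
          push_cast; ring
      _ ≤ 4 * ((N : ℝ) * H ^ 2 + (K : ℝ) ^ 2) := by linarith [hRHS]
  refine le_trans keyR ?_
  clear key keyR hRHS castLHS hHarm
  -- final numeric estimate
  have hN0 : (0 : ℝ) ≤ (N : ℝ) := Nat.cast_nonneg _
  have hsq : H ^ 2 ≤ (1 + L) ^ 2 := by nlinarith
  have h1 : (N : ℝ) * H ^ 2 ≤ T * (1 + L) ^ 2 := by nlinarith
  have h2 : T * (1 + L) ^ 2 ≤ 9 * T * L ^ 2 := by nlinarith [mul_nonneg (by linarith : (0:ℝ) ≤ 2*L - 1) (by linarith : (0:ℝ) ≤ 4*L + 1)]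
  have h3 : (K : ℝ) ^ 2 ≤ T := le_trans hKN hNT
  have h4 : T ≤ 4 * T * L ^ 2 := by
    have pos : 0 ≤ T * ((2 * L - 1) * (2 * L + 1)) :=
      mul_nonneg hT0.le (mul_nonneg (by linarith) (by linarith))
    nlinarith [pos]
  have hTL : 0 ≤ T * L ^ 2 := by positivity
  linarith [h1, h2, h3, h4, hTL]
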